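/- Let (R, 𝔪, K) be a Noetherian local ring of characteristic p, f₁,…,f_t part of a system of parameters, I = (f₁,…,f_t), R̄ = R/I, and J an 𝔪-primary ideal with I ⊆ J. Then e_HK(J; R) ≤ e_HK(JR̄; R̄) · Vol_F^J(f₁,…,f_t), where e_HK denotes Hilbert-Kunz multiplicity. -/

import Mathlib

open Ideal Filter MeasureTheory

/-- The `q`-th Frobenius power of an ideal: the ideal generated by `q`-th powers of its
elements (used with `q = p ^ e`). -/
def Ideal.frobPow {R : Type*} [CommRing R] (J : Ideal R) (q : ℕ) : Ideal R :=
  Ideal.span ((fun a => a ^ q) '' (J : Set R))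

/-- The set `V` of exponent vectors `a ∈ ℕ^t` with `I₁^{a₁} ⋯ I_t^{a_t} ⊄ J'`. -/
def Vnu {R : Type*} [CommRing R] {t : ℕ} (I : Fin t → Ideal R) (J' : Ideal R) :
    Set (Fin t → ℕ) :=
  {a | ¬ (∏ i, I i ^ a i) ≤ J'}

/-- The length of an `A`-module `M`: the Krull dimension of its lattice of submodules. -/
noncomputable def modLength (A M : Type*) [CommRing A] [AddCommGroup M] [Module A M] : ℕ∞ :=
  (Order.krullDim (Submodule A M)).unbotD 0


section Aux
open Order

variable {β γ : Type*} [PartialOrder β] [PartialOrder γ]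

lemma my_height_add_one_le {a b : β} (h : a < b) : Order.height a + 1 ≤ Order.height b := by
  rw [Order.height_eq_iSup_lt_height b]
  exact le_iSup₂ (f := fun y (_ : y < b) => Order.height y + 1) a h

lemma my_length_le (p : LTSeries (β × γ)) :
    (p.length : ℕ∞) ≤ Order.height p.last.1 + Order.height p.last.2 := by
  obtain ⟨n, hn⟩ : ∃ n, p.length = n := ⟨_, rfl⟩
  rw [hn]
  induction n generalizing p with
  | zero => simp
  | succ n ih =>
    have hne : p.length ≠ 0 := by omega
    have hq : p.eraseLast.length = n := by simp [hn]
    have hlt : p.eraseLast.last < p.last := p.eraseLast_last_rel_last hne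
    have ihq := ih p.eraseLast hq
    rcases Prod.lt_iff.mp hlt with ⟨h1, h2⟩ | ⟨h1, h2⟩
    · calc ((n : ℕ∞) + 1) ≤ (Order.height p.eraseLast.last.1 + Order.height p.eraseLast.last.2) + 1 := by
            exact add_le_add_left ihq 1
        _ = (Order.height p.eraseLast.last.1 + 1) + Order.height p.eraseLast.last.2 := by ring
        _ ≤ Order.height p.last.1 + Order.height p.last.2 :=
            add_le_add (my_height_add_one_le h1) (Order.height_mono h2)
    · calc ((n : ℕ∞) + 1) ≤ (Order.height p.eraseLast.last.1 + Order.height p.eraseLast.last.2) + 1 := by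
            exact add_le_add_left ihq 1
        _ = Order.height p.eraseLast.last.1 + (Order.height p.eraseLast.last.2 + 1) := by ring
        _ ≤ Order.height p.last.1 + Order.height p.last.2 :=
            add_le_add (Order.height_mono h1) (my_height_add_one_le h2)

lemma my_krullDim_prod : krullDim (β × γ) ≤ krullDim β + krullDim γ := by
  rw [Order.krullDim]
  apply iSup_le
  intro p
  calc ((p.length : ℕ∞) : WithBot ℕ∞) ≤ ((Order.height p.last.1 + Order.height p.last.2 : ℕ∞) : WithBot ℕ∞) := by
        exact_mod_cast my_length_le p
    _ = (Order.height p.last.1 : WithBot ℕ∞) + (Order.height p.last.2 : WithBot ℕ∞) := by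
        push_cast; rfl
    _ ≤ krullDim β + krullDim γ :=
        add_le_add (Order.height_le_krullDim _) (Order.height_le_krullDim _)

lemma my_krullDim_le_of_strictMono_prod {α : Type*} [Preorder α] (f : α → β × γ)
    (hf : StrictMono f) : krullDim α ≤ krullDim β + krullDim γ :=
  (krullDim_le_of_strictMono f hf).trans my_krullDim_prod


section IdealLen
variable {R : Type*} [CommRing R]

noncomputable def iLen (A : Ideal R) : ℕ∞ := (krullDim {B : Ideal R // A ≤ B}).unbotD 0

lemma krullDim_iLen (A : Ideal R) :
    krullDim {B : Ideal R // A ≤ B} = (iLen A : WithBot ℕ∞) := by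
  have : Nonempty {B : Ideal R // A ≤ B} := ⟨⟨⊤, le_top⟩⟩
  have h0 := krullDim_nonneg (α := {B : Ideal R // A ≤ B})
  rw [iLen]
  cases hk : krullDim {B : Ideal R // A ≤ B} with
  | bot => rw [hk] at h0; exact absurd h0 (by simp)
  | coe a => simp

lemma modLength_eq_iLen (A : Ideal R) : modLength R (R ⧸ A) = iLen A := by
  rw [modLength, iLen]
  congr 1
  exact krullDim_eq_of_orderIso (Submodule.comapMkQRelIso A)

lemma iLen_anti {A A' : Ideal R} (h : A ≤ A') : iLen A' ≤ iLen A := by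
  have := krullDim_le_of_strictMono
    (fun B : {B : Ideal R // A' ≤ B} => (⟨B.1, h.trans B.2⟩ : {B : Ideal R // A ≤ B}))
    (fun x y hxy => hxy)
  rw [krullDim_iLen, krullDim_iLen] at this
  exact_mod_cast this

lemma iLen_top : iLen (⊤ : Ideal R) = 0 := by
  have : Unique {B : Ideal R // (⊤ : Ideal R) ≤ B} :=
    ⟨⟨⟨⊤, le_rfl⟩⟩, fun B => Subtype.ext (top_le_iff.mp B.2)⟩
  have := krullDim_eq_zero_of_unique (α := {B : Ideal R // (⊤ : Ideal R) ≤ B})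
  rw [krullDim_iLen] at this
  exact_mod_cast this

lemma modLength_quot_eq_iLen (I : Ideal R) (X : Ideal (R ⧸ I)) :
    modLength (R ⧸ I) ((R ⧸ I) ⧸ X) = iLen (X.comap (Ideal.Quotient.mk I)) := by
  rw [modLength, iLen]
  congr 1
  have hsurj : Function.Surjective (Ideal.Quotient.mk I) := Ideal.Quotient.mk_surjective
  have hker : ∀ B : {B : Ideal R // Ideal.comap (Ideal.Quotient.mk I) X ≤ B},
      Ideal.comap (Ideal.Quotient.mk I) (Ideal.map (Ideal.Quotient.mk I) B.1) = B.1 := fun B => by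
    rw [Ideal.comap_map_of_surjective _ hsurj, sup_eq_left]
    exact le_trans (Ideal.comap_mono bot_le) B.2
  refine krullDim_eq_of_orderIso ((Submodule.comapMkQRelIso X).trans (OrderIso.symm ?_))
  exact
  { toFun := fun B => ⟨Ideal.map (Ideal.Quotient.mk I) B.1, by
      conv_lhs => rw [← Ideal.map_comap_of_surjective _ hsurj X]
      exact Ideal.map_mono B.2⟩
    invFun := fun Y => ⟨Ideal.comap (Ideal.Quotient.mk I) (Y.1 : Ideal (R ⧸ I)),
      Ideal.comap_mono Y.2⟩
    left_inv := fun B => Subtype.ext (hker B)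
    right_inv := fun Y => Subtype.ext (Ideal.map_comap_of_surjective _ hsurj (Y.1 : Ideal (R ⧸ I)))
    map_rel_iff' := fun {B B'} => by
      constructor
      · intro h
        have h2 : Ideal.comap (Ideal.Quotient.mk I) (Ideal.map (Ideal.Quotient.mk I) B.1) ≤
            Ideal.comap (Ideal.Quotient.mk I) (Ideal.map (Ideal.Quotient.mk I) B'.1) :=
          Ideal.comap_mono h
        rwa [hker B, hker B'] at h2
      · exact fun h => Ideal.map_mono h }


lemma stepLen (D B : Ideal R) (x : R) (hx : ∀ d ∈ D, d * x ∈ B) :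
    iLen B ≤ iLen (B ⊔ Ideal.span {x}) + iLen D := by
  set A := B ⊔ Ideal.span {x} with hA
  have hBA : B ≤ A := le_sup_left
  set ψ : Ideal R → Ideal R := fun E => Submodule.comap (LinearMap.mulRight R x) E with hψ
  have memψ : ∀ (E : Ideal R) (r : R), r ∈ ψ E ↔ r * x ∈ E := by
    intro E r; simp [hψ, Submodule.mem_comap]
  have key : krullDim {C : Ideal R // B ≤ C} ≤
      krullDim {C : Ideal R // A ≤ C} + krullDim {C : Ideal R // D ≤ C} := by
    refine my_krullDim_le_of_strictMono_prod
      (fun C => (⟨C.1 ⊔ A, le_sup_right⟩, ⟨ψ (C.1 ⊓ A), fun d hd => (memψ _ d).mpr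
        (Submodule.mem_inf.mpr ⟨C.2 (hx d hd), hBA (hx d hd)⟩)⟩)) ?_
    intro C C' hlt
    have hlt' : C.1 < C'.1 := hlt
    have hle1 : C.1 ⊔ A ≤ C'.1 ⊔ A := sup_le_sup_right hlt'.le A
    have hle2 : ψ (C.1 ⊓ A) ≤ ψ (C'.1 ⊓ A) :=
      Submodule.comap_mono (inf_le_inf_right A hlt'.le)
    by_cases hsup : C.1 ⊔ A = C'.1 ⊔ A
    · have hinf : C.1 ⊓ A < C'.1 ⊓ A := by
        refine lt_of_le_of_ne (inf_le_inf_right A hlt'.le) fun heq => hlt'.ne ?_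
        exact eq_of_le_of_inf_le_of_sup_le hlt'.le heq.ge hsup.ge
      obtain ⟨y, hy, hy'⟩ := SetLike.exists_of_lt hinf
      obtain ⟨b, hb, z, hz, hbz⟩ := Submodule.mem_sup.mp (Submodule.mem_inf.mp hy).2
      obtain ⟨r, hr⟩ := Submodule.mem_span_singleton.mp hz
      have hz' : z = r * x := by rw [← hr, smul_eq_mul]
      have hbC' : b ∈ C'.1 ⊓ A := Submodule.mem_inf.mpr ⟨C'.2 hb, hBA hb⟩
      have hrin : r ∈ ψ (C'.1 ⊓ A) := by
        rw [memψ]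
        have h1 : r * x = y - b := by rw [← hz', ← hbz]; ring
        rw [h1]; exact sub_mem hy hbC'
      have hrout : r ∉ ψ (C.1 ⊓ A) := by
        rw [memψ]
        intro hmem
        apply hy'
        have h2 : y = b + r * x := by rw [← hz', hbz]
        rw [h2]
        exact add_mem (Submodule.mem_inf.mpr ⟨C.2 hb, hBA hb⟩) hmem
      refine Prod.lt_iff.mpr (Or.inr ⟨?_, ?_⟩)
      · exact Subtype.mk_le_mk.mpr hsup.le
      · exact Subtype.mk_lt_mk.mpr (lt_of_le_of_ne hle2 fun heq => hrout (heq ▸ hrin))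
    · refine Prod.lt_iff.mpr (Or.inl ⟨?_, ?_⟩)
      · exact Subtype.mk_lt_mk.mpr (lt_of_le_of_ne hle1 hsup)
      · exact Subtype.mk_le_mk.mpr hle2
  rw [krullDim_iLen, krullDim_iLen, krullDim_iLen] at key
  exact_mod_cast key

lemma listLen (D B : Ideal R) (l : List R)
    (hcond : ∀ (i : ℕ) (hi : i < l.length), ∀ d ∈ D,
      d * l.get ⟨i, hi⟩ ∈ B ⊔ Ideal.span {y | y ∈ l.drop (i + 1)}) :
    iLen B ≤ iLen (B ⊔ Ideal.span {y | y ∈ l}) + (l.length : ℕ∞) * iLen D := by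
  induction l generalizing B with
  | nil => simp
  | cons a l ih =>
    have hstep : iLen (B ⊔ Ideal.span {y | y ∈ l}) ≤
        iLen ((B ⊔ Ideal.span {y | y ∈ l}) ⊔ Ideal.span {a}) + iLen D := by
      refine stepLen D _ a fun d hd => ?_
      have := hcond 0 (by simp) d hd
      simpa using this
    have hih : iLen B ≤ iLen (B ⊔ Ideal.span {y | y ∈ l}) + (l.length : ℕ∞) * iLen D := by
      refine ih B fun i hi d hd => ?_
      have := hcond (i + 1) (by simpa using Nat.succ_lt_succ hi) d hd
      simpa using this
    have heq : (B ⊔ Ideal.span {y | y ∈ l}) ⊔ Ideal.span {a}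
        = B ⊔ Ideal.span {y | y ∈ a :: l} := by
      have : {y | y ∈ a :: l} = insert a {y | y ∈ l} := by
        ext y; simp [List.mem_cons]
      rw [this]
      simp only [Ideal.span]
      rw [Submodule.span_insert]
      rw [sup_assoc, sup_comm (Submodule.span R {a}) _]
    calc iLen B ≤ iLen (B ⊔ Ideal.span {y | y ∈ l}) + (l.length : ℕ∞) * iLen D := hih
      _ ≤ (iLen ((B ⊔ Ideal.span {y | y ∈ l}) ⊔ Ideal.span {a}) + iLen D)
          + (l.length : ℕ∞) * iLen D := add_le_add_left hstep _
      _ = iLen (B ⊔ Ideal.span {y | y ∈ a :: l}) + ((l.length : ℕ∞) * iLen D + iLen D) := by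
          rw [heq]; ring
      _ = iLen (B ⊔ Ideal.span {y | y ∈ a :: l}) + ((a :: l).length : ℕ∞) * iLen D := by
          congr 1
          rw [List.length_cons]
          push_cast
          rw [add_one_mul]


section Main
variable {t : ℕ} (f : Fin t → R) (J' : Ideal R)

local notation "F" => fun a : Fin t → ℕ => ∏ i, f i ^ a i

lemma memV (a : Fin t → ℕ) :
    a ∈ Vnu (fun i => Ideal.span {f i}) J' ↔ (∏ i, f i ^ a i) ∉ J' := by
  unfold Vnu
  have : (∏ i, Ideal.span {f i} ^ a i) = Ideal.span {∏ i, f i ^ a i} := by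
    simp_rw [Ideal.span_singleton_pow]
    rw [Ideal.prod_span_singleton]
  simp [this, Ideal.span_singleton_le_iff_mem]

lemma prodF_single (a : Fin t → ℕ) (j : Fin t) :
    (∏ i, f i ^ a i) * f j = ∏ i, f i ^ (a + Pi.single j 1 : Fin t → ℕ) i := by
  have h : ∀ i, f i ^ (a + Pi.single j 1 : Fin t → ℕ) i
      = f i ^ a i * f i ^ (Pi.single j 1 : Fin t → ℕ) i := by
    intro i; rw [Pi.add_apply, pow_add]
  simp_rw [h]
  rw [Finset.prod_mul_distrib]
  congr 1
  rw [Finset.prod_eq_single j (fun i _ hi => by simp [Pi.single_apply, hi]) (by simp)]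
  simp

lemma finV (N : ℕ) (hN : ∀ i, f i ^ N ∈ J') :
    (Vnu (fun i => Ideal.span {f i}) J').Finite := by
  apply Set.Finite.subset (Set.finite_Icc (fun _ : Fin t => 0) (fun _ => N))
  intro a ha
  rw [memV] at ha
  simp only [Set.mem_Icc, Pi.le_def]
  constructor
  · intro i; exact Nat.zero_le _
  · intro i
    by_contra hlt
    push_neg at hlt
    apply ha
    have : f i ^ a i ∈ J' := by
      have : f i ^ a i = f i ^ N * f i ^ (a i - N) := by
        rw [← pow_add]; congr 1; omega
      rw [this]; exact Ideal.mul_mem_right _ _ (hN i)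
    have hsplit : (∏ k, f k ^ a k) = f i ^ a i * ∏ k ∈ Finset.univ.erase i, f k ^ a k := by
      rw [← Finset.prod_erase_mul _ _ (Finset.mem_univ i)]; ring
    rw [hsplit]
    exact Ideal.mul_mem_right _ _ this

lemma mainLen (N : ℕ) (hN : ∀ i, f i ^ N ∈ J') :
    iLen J' ≤ ((Vnu (fun i => Ideal.span {f i}) J').ncard : ℕ∞)
      * iLen (Ideal.span (Set.range f) ⊔ J') := by
  classical
  by_cases hJtop : J' = ⊤
  · rw [hJtop, iLen_top]; exact zero_le
  set V := Vnu (fun i => Ideal.span {f i}) J' with hV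
  have hfin : V.Finite := finV f J' N hN
  set wt : (Fin t → ℕ) → ℕ := fun a => ∑ i, a i with hwt
  set l₀ : List (Fin t → ℕ) := hfin.toFinset.toList with hl₀
  set lv : List (Fin t → ℕ) := l₀.mergeSort (fun a b => decide (wt a ≤ wt b)) with hlv
  have hperm : lv.Perm l₀ := List.mergeSort_perm l₀ _
  have hmemlv : ∀ a, a ∈ lv ↔ a ∈ V := by
    intro a
    rw [hperm.mem_iff, hl₀, Finset.mem_toList, Set.Finite.mem_toFinset]
  have hnd : lv.Nodup := hperm.nodup_iff.mpr (Finset.nodup_toList _)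
  have hlen : lv.length = V.ncard := by
    rw [hperm.length_eq, hl₀, Finset.length_toList, Set.ncard_eq_toFinset_card _ hfin]
  have hsorted : lv.Pairwise (fun a b => wt a ≤ wt b) := by
    have := List.pairwise_mergeSort (le := fun a b => decide (wt a ≤ wt b))
      (fun a b c h₁ h₂ => by
        simp only [decide_eq_true_eq] at h₁ h₂ ⊢; omega)
      (fun a b => by simpa using Nat.le_total (wt a) (wt b)) l₀
    rw [← hlv] at this
    exact List.Pairwise.imp (fun h => by simpa using h) this
  set l : List R := lv.map F with hl
  have hcond : ∀ (i : ℕ) (hi : i < l.length), ∀ d ∈ Ideal.span (Set.range f) ⊔ J',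
      d * l.get ⟨i, hi⟩ ∈ J' ⊔ Ideal.span {y | y ∈ l.drop (i + 1)} := by
    intro i hi d hd
    have hiv : i < lv.length := by simpa [hl] using hi
    set a : Fin t → ℕ := lv.get ⟨i, hiv⟩ with ha
    have hgl : l.get ⟨i, hi⟩ = F a := by
      simp [hl, ha, List.getElem_map]
    rw [hgl]
    obtain ⟨u, hu, v, hv, rfl⟩ := Submodule.mem_sup.mp hd
    refine add_mul u v (F a) ▸ add_mem ?_ ?_
    swap
    · exact Submodule.mem_sup_left (Ideal.mul_mem_right _ _ hv)
    -- u ∈ span (range f)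
    have hgen : ∀ j : Fin t, f j * F a ∈ J' ⊔ Ideal.span {y | y ∈ l.drop (i + 1)} := by
      intro j
      rw [mul_comm, prodF_single]
      set b : Fin t → ℕ := a + Pi.single j 1 with hb
      by_cases hbJ : (∏ i, f i ^ b i) ∈ J'
      · exact Submodule.mem_sup_left hbJ
      · have hbV : b ∈ V := (memV f J' b).mpr hbJ
        obtain ⟨⟨jdx, hjdx⟩, hbl⟩ := List.mem_iff_get.mp ((hmemlv b).mpr hbV)
        simp only [List.get_eq_getElem] at hbl
        have hwtb : wt b = wt a + 1 := by
          simp [hb, hwt, Finset.sum_add_distrib]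
        have hwta : wt a = wt (lv[i]'hiv) := by rw [ha]; simp
        have hij : i < jdx := by
          rcases lt_trichotomy jdx i with hc | hc | hc
          · exfalso
            have hle := List.pairwise_iff_getElem.mp hsorted jdx i hjdx hiv hc
            rw [hbl, ← hwta] at hle
            omega
          · exfalso
            have hba : wt b = wt a := by
              subst hc
              rw [hbl] at hwta
              rw [hwta]
            omega
          · exact hc
        have hmemb : b ∈ lv.drop (i + 1) := by
          obtain ⟨k, rfl⟩ : ∃ k, jdx = (i + 1) + k := ⟨jdx - (i + 1), by omega⟩
          rw [List.getElem_drop' hjdx] at hbl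
          exact hbl ▸ List.getElem_mem _
        have hmemdrop : (∏ i, f i ^ b i) ∈ {y | y ∈ l.drop (i + 1)} := by
          simp only [hl, ← List.map_drop, Set.mem_setOf_eq, List.mem_map]
          exact ⟨b, hmemb, rfl⟩
        exact Submodule.mem_sup_right (Ideal.subset_span hmemdrop)
    have hmul : Ideal.span (Set.range f) * Ideal.span {F a}
        ≤ J' ⊔ Ideal.span {y | y ∈ l.drop (i + 1)} := by
      rw [Ideal.span_mul_span']
      rw [Ideal.span_le]
      rintro z ⟨x, ⟨j, rfl⟩, y, hy, rfl⟩
      rcases Set.mem_singleton_iff.mp hy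
      exact hgen j
    exact hmul (Ideal.mul_mem_mul hu (Ideal.subset_span rfl))
  have hmain := listLen (Ideal.span (Set.range f) ⊔ J') J' l hcond
  have htop : J' ⊔ Ideal.span {y | y ∈ l} = ⊤ := by
    rw [eq_top_iff_one]
    have h0V : (0 : Fin t → ℕ) ∈ V := by
      rw [memV]
      simpa using fun h => hJtop (Ideal.eq_top_iff_one J' |>.mpr h)
    have : (1 : R) ∈ {y | y ∈ l} := by
      simp only [hl, Set.mem_setOf_eq, List.mem_map]
      exact ⟨0, (hmemlv 0).mpr h0V, by simp⟩
    exact Submodule.mem_sup_right (Ideal.subset_span this)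
  rw [htop, iLen_top, zero_add] at hmain
  calc iLen J' ≤ (l.length : ℕ∞) * iLen (Ideal.span (Set.range f) ⊔ J') := hmain
    _ = _ := by rw [hl, List.length_map, hlen]

end Main

end IdealLen
end Aux

/-- For `f₁,…,f_t` part of a system of parameters of a Noetherian local ring `R` of
dimension `t + s`, `I = (f)`, `R̄ = R/I`, and `J ⊇ I` an `𝔪`-primary ideal:
`e_HK(J; R) ≤ e_HK(J R̄; R̄) · Vol_F^J(f₁,…,f_t)`. -/
theorem stmt18 {R : Type*} [CommRing R] [IsNoetherianRing R] [IsLocalRing R] (p : ℕ)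
    [Fact p.Prime] [CharP R p] {t s : ℕ} (f : Fin t → R) (g : Fin s → R)
    (hdim : ringKrullDim R = ((t + s : ℕ) : WithBot (WithTop ℕ)))
    (hsop : (Ideal.span (Set.range f ∪ Set.range g)).radical = IsLocalRing.maximalIdeal R)
    (I J : Ideal R) (hI : I = Ideal.span (Set.range f))
    (hJprim : J.radical = IsLocalRing.maximalIdeal R) (hIJ : I ≤ J)
    (eR eS V : ℝ)
    (heR : Tendsto
      (fun e : ℕ => ((modLength R (R ⧸ J.frobPow (p ^ e))).toNat : ℝ) /
        (p : ℝ) ^ (e * (t + s))) atTop (nhds eR))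
    (heS : Tendsto
      (fun e : ℕ =>
        ((modLength (R ⧸ I)
            ((R ⧸ I) ⧸ ((J.map (Ideal.Quotient.mk I)).frobPow (p ^ e)))).toNat : ℝ) /
          (p : ℝ) ^ (e * s)) atTop (nhds eS))
    (hV : Tendsto
      (fun e : ℕ => ((Vnu (fun i => Ideal.span {f i}) (J.frobPow (p ^ e))).ncard : ℝ) /
        (p : ℝ) ^ (e * t)) atTop (nhds V)) :
    eR ≤ eS * V := by
  classical
  have hsurj : Function.Surjective (Ideal.Quotient.mk I) := Ideal.Quotient.mk_surjective
  -- frobPow commutes with map along the surjection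
  have hfrobmap : ∀ q : ℕ, (J.map (Ideal.Quotient.mk I)).frobPow q
      = (J.frobPow q).map (Ideal.Quotient.mk I) := by
    intro q
    rw [Ideal.frobPow, Ideal.frobPow, Ideal.map_span]
    apply le_antisymm
    · rw [Ideal.span_le]
      rintro y ⟨x, hx, rfl⟩
      obtain ⟨r, hr, rfl⟩ := Ideal.mem_map_iff_of_surjective _ hsurj |>.mp hx
      exact Ideal.subset_span ⟨r ^ q, ⟨r, hr, rfl⟩, map_pow _ _ _⟩
    · rw [Ideal.span_le]
      rintro y ⟨z, ⟨x, hx, rfl⟩, rfl⟩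
      refine Ideal.subset_span ⟨Ideal.Quotient.mk I x, Ideal.mem_map_of_mem _ hx, ?_⟩
      exact (map_pow _ _ _).symm
  have hcomap : ∀ q : ℕ,
      Ideal.comap (Ideal.Quotient.mk I) ((J.map (Ideal.Quotient.mk I)).frobPow q)
        = I ⊔ J.frobPow q := by
    intro q
    rw [hfrobmap q, Ideal.comap_map_of_surjective _ hsurj, ← RingHom.ker_eq_comap_bot,
      Ideal.mk_ker, sup_comm]
  -- pointwise inequality on lengths
  have hkey : ∀ e : ℕ,
      ((modLength R (R ⧸ J.frobPow (p ^ e))).toNat : ℕ)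
        ≤ (Vnu (fun i => Ideal.span {f i}) (J.frobPow (p ^ e))).ncard *
          (modLength (R ⧸ I)
            ((R ⧸ I) ⧸ ((J.map (Ideal.Quotient.mk I)).frobPow (p ^ e)))).toNat := by
    intro e
    set q := p ^ e
    set J' := J.frobPow q with hJ'
    have hLq : modLength (R ⧸ I) ((R ⧸ I) ⧸ ((J.map (Ideal.Quotient.mk I)).frobPow q))
        = iLen (I ⊔ J') := by
      rw [modLength_quot_eq_iLen, hcomap]
    have hLR : modLength R (R ⧸ J') = iLen J' := modLength_eq_iLen J'
    have hNpow : ∀ i, f i ^ q ∈ J' := by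
      intro i
      have hfi : f i ∈ J := hIJ (hI ▸ Ideal.subset_span (Set.mem_range_self i))
      exact Ideal.subset_span ⟨f i, hfi, rfl⟩
    have hmain := mainLen f J' q hNpow
    rw [← hI] at hmain
    have hanti : iLen (I ⊔ J') ≤ iLen J' := iLen_anti le_sup_right
    rw [hLR, hLq]
    cases hc : iLen J' with
    | top => simp
    | coe n =>
      rw [hc] at hanti hmain
      cases hc2 : iLen (I ⊔ J') with
      | top => rw [hc2] at hanti; exact absurd hanti (by simp)
      | coe m =>
        rw [hc2] at hmain
        have : (n : ℕ∞) ≤ ((Vnu (fun i => Ideal.span {f i}) J').ncard * m : ℕ) := by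
          exact_mod_cast hmain
        simpa using (by exact_mod_cast this : n ≤ (Vnu (fun i => Ideal.span {f i}) J').ncard * m)
  -- real inequality pointwise
  have hreal : ∀ e : ℕ,
      ((modLength R (R ⧸ J.frobPow (p ^ e))).toNat : ℝ) / (p : ℝ) ^ (e * (t + s))
        ≤ (((Vnu (fun i => Ideal.span {f i}) (J.frobPow (p ^ e))).ncard : ℝ) /
            (p : ℝ) ^ (e * t)) *
          (((modLength (R ⧸ I)
            ((R ⧸ I) ⧸ ((J.map (Ideal.Quotient.mk I)).frobPow (p ^ e)))).toNat : ℝ) /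
            (p : ℝ) ^ (e * s)) := by
    intro e
    have hp0 : (0 : ℝ) < (p : ℝ) := by
      exact_mod_cast (Fact.out : p.Prime).pos
    have hsplit : (p : ℝ) ^ (e * (t + s)) = (p : ℝ) ^ (e * t) * (p : ℝ) ^ (e * s) := by
      rw [← pow_add, ← Nat.mul_add]
    rw [hsplit, ← mul_div_mul_comm]
    have hnum : ((modLength R (R ⧸ J.frobPow (p ^ e))).toNat : ℝ)
        ≤ ((Vnu (fun i => Ideal.span {f i}) (J.frobPow (p ^ e))).ncard : ℝ) *
          ((modLength (R ⧸ I)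
            ((R ⧸ I) ⧸ ((J.map (Ideal.Quotient.mk I)).frobPow (p ^ e)))).toNat : ℝ) := by
      exact_mod_cast hkey e
    have hden : (0 : ℝ) < (p : ℝ) ^ (e * t) * (p : ℝ) ^ (e * s) := by positivity
    exact div_le_div_of_nonneg_right hnum hden.le |>.trans_eq rfl
  have hlim : Tendsto
      (fun e : ℕ =>
        (((Vnu (fun i => Ideal.span {f i}) (J.frobPow (p ^ e))).ncard : ℝ) /
            (p : ℝ) ^ (e * t)) *
          (((modLength (R ⧸ I)
            ((R ⧸ I) ⧸ ((J.map (Ideal.Quotient.mk I)).frobPow (p ^ e)))).toNat : ℝ) /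
            (p : ℝ) ^ (e * s))) atTop (nhds (V * eS)) := hV.mul heS
  have := le_of_tendsto_of_tendsto' heR hlim hreal
  linarith [this]
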